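/- Let G be a complete graph on at least n + α + 1 vertices with an edge coloring, and let l be a color such that every vertex of G is incident to at most α edges of colors other than l. Then G contains a copy of every forest F on n vertices all of whose edges are colored l (a monochromatic copy of F in color l). -/
import Mathlib


open Finset

/-- Every nonempty finite acyclic graph has a vertex with at most one neighbour. -/
lemma exists_near_leaf {A : Type*} [Fintype A] [Nonempty A] {G : SimpleGraph A}
    (hG : G.IsAcyclic) : ∃ x : A, ∀ b c : A, G.Adj x b → G.Adj x c → b = c := by
  classical
  set P : Set ℕ := {n | ∃ (u v : A) (p : G.Walk u v), p.IsPath ∧ p.length = n} with hP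
  have hne : P.Nonempty :=
    ⟨0, Classical.arbitrary A, Classical.arbitrary A, SimpleGraph.Walk.nil,
      SimpleGraph.Walk.IsPath.nil, rfl⟩
  have hbdd : BddAbove P := by
    refine ⟨Fintype.card A, fun n hn => ?_⟩
    obtain ⟨u, v, p, hp, hl⟩ := hn
    exact hl ▸ le_of_lt hp.length_lt
  obtain ⟨u, v, p, hp, hlen⟩ := Nat.sSup_mem hne hbdd
  have hmax : ∀ n ∈ P, n ≤ sSup P := fun n hn => le_csSup hbdd hn
  have hsupp : ∀ w : A, G.Adj u w → w ∈ p.support := by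
    intro w hw
    by_contra hns
    have hp' : (SimpleGraph.Walk.cons hw.symm p).IsPath :=
      (SimpleGraph.Walk.cons_isPath_iff _ _).2 ⟨hp, hns⟩
    have := hmax (p.length + 1) ⟨w, v, SimpleGraph.Walk.cons hw.symm p, hp', rfl⟩
    omega
  refine ⟨u, ?_⟩
  cases p with
  | nil =>
    intro b c hb _
    exact absurd (hsupp b hb) (by simpa using hb.ne')
  | cons h' p' =>
    rename_i x₀
    have hkey : ∀ w : A, G.Adj u w → w = x₀ := by
      intro w hw
      by_contra hwx
      have hws := hsupp w hw
      set q := (SimpleGraph.Walk.cons h' p').takeUntil w hws with hq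
      have hqp : q.IsPath := hp.takeUntil hws
      have hedge : s(u, w) ∉ q.edges := by
        intro hmem
        have hsub := (SimpleGraph.Walk.cons h' p').edges_takeUntil_subset hws
        have hmem' := hsub hmem
        rw [SimpleGraph.Walk.edges_cons, List.mem_cons] at hmem'
        rcases hmem' with heq | hmem'
        · rw [Sym2.eq_iff] at heq
          rcases heq with ⟨_, h2⟩ | ⟨h1, h2⟩
          · exact hwx h2
          · exact hw.ne' h2
        · have : u ∈ p'.support := SimpleGraph.Walk.fst_mem_support_of_mem_edges p' hmem'
          rw [SimpleGraph.Walk.cons_isPath_iff] at hp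
          exact hp.2 this
      have hcyc : (SimpleGraph.Walk.cons hw q.reverse).IsCycle := by
        rw [SimpleGraph.Walk.cons_isCycle_iff]
        refine ⟨hqp.reverse, ?_⟩
        rw [SimpleGraph.Walk.edges_reverse, List.mem_reverse]
        exact hedge
      exact hG _ hcyc
    intro b c hb hc
    rw [hkey b hb, hkey c hc]

/-- Greedy embedding, stated for induction on the number of vertices. -/
lemma mono_forest_aux (α : ℕ) : ∀ (m : ℕ) (A : Type*) [Fintype A] [DecidableEq A]
    (F : SimpleGraph A), F.IsAcyclic → Fintype.card A = m →
    ∀ (V : Type*) [Fintype V] [DecidableEq V], m + α ≤ Fintype.card V →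
    ∀ (C : Type*) [DecidableEq C] (l : C) (χ : V → V → C), (∀ x y, χ x y = χ y x) →
    (∀ v : V, (univ.filter fun u => u ≠ v ∧ χ v u ≠ l).card ≤ α) →
    ∃ f : A ↪ V, ∀ x y : A, F.Adj x y → χ (f x) (f y) = l := by
  intro m
  induction m with
  | zero =>
    intro A _ _ F _ hcard V _ _ _ C _ l χ _ _
    have : IsEmpty A := Fintype.card_eq_zero_iff.mp hcard
    exact ⟨Function.Embedding.ofIsEmpty, fun x => isEmptyElim x⟩
  | succ m ih =>
    intro A _ _ F hforest hcard V _ _ hV C _ l χ hsym hdom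
    classical
    have hAne : Nonempty A := Fintype.card_pos_iff.mp (by omega)
    obtain ⟨x, hx⟩ := exists_near_leaf hforest
    -- the forest with `x` removed
    set A' := {y : A // y ≠ x} with hA'
    set F' : SimpleGraph A' := F.comap (Function.Embedding.subtype _) with hF'
    have hforest' : F'.IsAcyclic := by
      intro v c hc
      exact hforest _
        (hc.map (f := (SimpleGraph.Embedding.comap (Function.Embedding.subtype _) F).toHom)
          (Function.Embedding.subtype _).injective)
    have hcard' : Fintype.card A' = m := by
      have h1 : Fintype.card {y : A // y = x} = 1 := Fintype.card_subtype_eq x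
      have h2 := Fintype.card_subtype_compl (fun y : A => y = x)
      simp only [h1, hcard] at h2
      simpa [hA'] using h2
    obtain ⟨f', hf'⟩ := ih A' F' hforest' hcard' V (by omega) C l χ hsym hdom
    set used : Finset V := univ.image f' with hused
    have husedcard : used.card = m := by
      rw [hused, Finset.card_image_of_injective _ f'.injective, card_univ, hcard']
    -- find a fresh vertex joined to the (unique possible) embedded neighbour by an `l`-edge
    have hext : ∃ v : V, v ∉ used ∧
        ∀ (b : A) (hb : b ≠ x), F.Adj x b → χ v (f' ⟨b, hb⟩) = l := by
      by_cases hxn : ∃ b : A, F.Adj x b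
      · obtain ⟨y₀, hy₀⟩ := hxn
        have hy₀x : y₀ ≠ x := hy₀.ne'
        set w : V := f' ⟨y₀, hy₀x⟩ with hw
        set bad : Finset V := univ.filter (fun u => u ≠ w ∧ χ w u ≠ l) with hbad
        have hbadcard : bad.card ≤ α := hdom w
        have hlt : (used ∪ bad).card < Fintype.card V := by
          calc (used ∪ bad).card ≤ used.card + bad.card := Finset.card_union_le _ _
            _ ≤ m + α := by omega
            _ < Fintype.card V := by omega
        have hcompl : ((used ∪ bad)ᶜ : Finset V).Nonempty := by
          rw [← Finset.card_pos, Finset.card_compl]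
          omega
        obtain ⟨v, hv⟩ := hcompl
        rw [Finset.mem_compl, Finset.mem_union, not_or] at hv
        refine ⟨v, hv.1, ?_⟩
        intro b hb hadj
        have hbeq : b = y₀ := hx b y₀ hadj hy₀
        have hfb : f' ⟨b, hb⟩ = w := by
          rw [hw]; congr 1; exact Subtype.ext hbeq
        have hvnbad := hv.2
        rw [hbad, Finset.mem_filter] at hvnbad
        have hvw : v ≠ w := by
          intro hvw
          exact hv.1 (hvw ▸ (Finset.mem_image.mpr ⟨⟨y₀, hy₀x⟩, Finset.mem_univ _, rfl⟩))
        have : χ w v = l := by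
          by_contra hne
          exact hvnbad ⟨Finset.mem_univ _, hvw, hne⟩
        rw [hfb, hsym v w, this]
      · have hlt : used.card < Fintype.card V := by omega
        have hcompl : (usedᶜ : Finset V).Nonempty := by
          rw [← Finset.card_pos, Finset.card_compl]
          omega
        obtain ⟨v, hv⟩ := hcompl
        rw [Finset.mem_compl] at hv
        exact ⟨v, hv, fun b hb hadj => absurd ⟨b, hadj⟩ hxn⟩
    obtain ⟨v, hvused, hvcol⟩ := hext
    -- build the full embedding
    set g : A → V := fun a => if h : a = x then v else f' ⟨a, h⟩ with hg
    have hginj : Function.Injective g := by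
      intro a b hab
      rw [hg] at hab
      by_cases ha : a = x <;> by_cases hb : b = x
      · rw [ha, hb]
      · simp only [ha, hb, dif_pos, dif_neg, not_false_iff] at hab
        exact absurd (Finset.mem_image.mpr ⟨⟨b, hb⟩, Finset.mem_univ _, hab.symm⟩) hvused
      · simp only [ha, hb, dif_pos, dif_neg, not_false_iff] at hab
        exact absurd (Finset.mem_image.mpr ⟨⟨a, ha⟩, Finset.mem_univ _, hab⟩) hvused
      · simp only [ha, hb, dif_neg, not_false_iff] at hab
        exact congrArg Subtype.val (f'.injective hab)
    refine ⟨⟨g, hginj⟩, ?_⟩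
    intro a b hadj
    simp only [Function.Embedding.coeFn_mk, hg]
    by_cases ha : a = x <;> by_cases hb : b = x
    · exact absurd (ha ▸ hb ▸ hadj) (F.irrefl)
    · subst ha
      rw [dif_pos rfl, dif_neg hb]
      exact hvcol b hb hadj
    · subst hb
      rw [dif_pos rfl, dif_neg ha]
      rw [hsym]
      exact hvcol a ha hadj.symm
    · rw [dif_neg ha, dif_neg hb]
      exact hf' ⟨a, ha⟩ ⟨b, hb⟩ hadj

/-- Greedy embedding: if every vertex of a large complete graph sees at most `α`
edges not colored `l`, then any forest on `n` vertices embeds monochromatically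
in color `l`. -/
theorem monochromatic_forest_embedding (n α : ℕ) (hn : 1 ≤ n)
    (A : Type*) [Fintype A] [DecidableEq A] (F : SimpleGraph A)
    (hforest : F.IsAcyclic) (hA : Fintype.card A = n)
    (V : Type*) [Fintype V] [DecidableEq V] (hV : n + α + 1 ≤ Fintype.card V)
    (C : Type*) [DecidableEq C] (l : C) (χ : V → V → C) (hsym : ∀ x y, χ x y = χ y x)
    (hdom : ∀ v : V, (univ.filter fun u => u ≠ v ∧ χ v u ≠ l).card ≤ α) :
    ∃ f : A ↪ V, ∀ x y : A, F.Adj x y → χ (f x) (f y) = l := by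
  exact mono_forest_aux α n A F hforest hA V (by omega) C l χ hsym hdom
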